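/- arXiv:2405.17833 — 9 statements merged into one kernel-verified Lean document; each statement's English description precedes it below -/
import Mathlib

section
/- Let E be a finite set. For each e ∈ E let ℓ̃(e) > 0 be a real number, let m(e) ≥ 1 be a natural number, and let p(e,k) ≥ 0 be real numbers for 1 ≤ k ≤ m(e). Set q(e) = ∑_{k=1}^{m(e)} p(e,k) and ℓ'(e) = ℓ̃(e)·q(e), and assume ∑_{e∈E} ℓ'(e) > 0. Then for every ε ∈ [0,1]: (∑_{e∈E} ℓ̃(e) · ∑_{k=1}^{m(e)} p(e,k)(1 − ε^k)) / (∑_{e∈E} ℓ'(e)) ≤ (∑_{e∈E} ℓ'(e)(1 − ε^{m(e)})) / (∑_{e∈E} ℓ'(e)). Moreover the inequality is strict if 0 < ε < 1 and there exist e ∈ E and k < m(e) with p(e,k)·ℓ̃(e) > 0. -/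
open Finset

/-- Core inequality of Proposition 6: the expected proportion of feature
diversity surviving a field-of-bullets extinction event is at most the
corresponding proportion of phylogenetic diversity (with edge lengths `ℓ'`),
with strict inequality if `0 < ε < 1` and some feature can survive to a number
of leaves `k` strictly smaller than `m e`. -/
theorem FD_ratio_le_PD_ratio {α : Type*} (E : Finset α)
    (ℓt : α → ℝ) (m : α → ℕ) (p : α → ℕ → ℝ)
    (hℓ : ∀ e ∈ E, 0 < ℓt e) (hm : ∀ e ∈ E, 1 ≤ m e)
    (hp : ∀ e ∈ E, ∀ k ∈ Finset.Icc 1 (m e), 0 ≤ p e k)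
    (hpos : 0 < ∑ e ∈ E, ℓt e * (∑ k ∈ Finset.Icc 1 (m e), p e k))
    (ε : ℝ) (hε0 : 0 ≤ ε) (hε1 : ε ≤ 1) :
    ((∑ e ∈ E, ℓt e * ∑ k ∈ Finset.Icc 1 (m e), p e k * (1 - ε ^ k)) /
        (∑ e ∈ E, ℓt e * (∑ k ∈ Finset.Icc 1 (m e), p e k)) ≤
      (∑ e ∈ E, (ℓt e * (∑ k ∈ Finset.Icc 1 (m e), p e k)) * (1 - ε ^ (m e))) /
        (∑ e ∈ E, ℓt e * (∑ k ∈ Finset.Icc 1 (m e), p e k))) ∧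
    ((0 < ε ∧ ε < 1 ∧ ∃ e ∈ E, ∃ k ∈ Finset.Icc 1 (m e), k < m e ∧ 0 < p e k * ℓt e) →
      (∑ e ∈ E, ℓt e * ∑ k ∈ Finset.Icc 1 (m e), p e k * (1 - ε ^ k)) /
        (∑ e ∈ E, ℓt e * (∑ k ∈ Finset.Icc 1 (m e), p e k)) <
      (∑ e ∈ E, (ℓt e * (∑ k ∈ Finset.Icc 1 (m e), p e k)) * (1 - ε ^ (m e))) /
        (∑ e ∈ E, ℓt e * (∑ k ∈ Finset.Icc 1 (m e), p e k))) := by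
  have key : ∀ e ∈ E,
      (ℓt e * (∑ k ∈ Finset.Icc 1 (m e), p e k)) * (1 - ε ^ (m e)) =
        ℓt e * ∑ k ∈ Finset.Icc 1 (m e), p e k * (1 - ε ^ (m e)) := by
    intro e _
    rw [← Finset.sum_mul, mul_assoc]
  have hterm : ∀ e ∈ E,
      ℓt e * ∑ k ∈ Finset.Icc 1 (m e), p e k * (1 - ε ^ k) ≤
        (ℓt e * (∑ k ∈ Finset.Icc 1 (m e), p e k)) * (1 - ε ^ (m e)) := by
    intro e he
    rw [key e he]
    refine mul_le_mul_of_nonneg_left (Finset.sum_le_sum ?_) (hℓ e he).le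
    intro k hk
    refine mul_le_mul_of_nonneg_left ?_ (hp e he k hk)
    have : ε ^ (m e) ≤ ε ^ k :=
      pow_le_pow_of_le_one hε0 hε1 (Finset.mem_Icc.mp hk).2
    linarith
  constructor
  · exact div_le_div_of_nonneg_right (Finset.sum_le_sum hterm) hpos.le
  · rintro ⟨hε0', hε1', e0, he0, k0, hk0, hklt, hpℓ⟩
    have hp0 : 0 < p e0 k0 := by nlinarith [hℓ e0 he0, hpℓ]
    have hstrict : ℓt e0 * ∑ k ∈ Finset.Icc 1 (m e0), p e0 k * (1 - ε ^ k) <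
        (ℓt e0 * (∑ k ∈ Finset.Icc 1 (m e0), p e0 k)) * (1 - ε ^ (m e0)) := by
      rw [key e0 he0]
      refine mul_lt_mul_of_pos_left ?_ (hℓ e0 he0)
      refine Finset.sum_lt_sum (fun k hk => ?_) ⟨k0, hk0, ?_⟩
      · refine mul_le_mul_of_nonneg_left ?_ (hp e0 he0 k hk)
        have : ε ^ (m e0) ≤ ε ^ k :=
          pow_le_pow_of_le_one hε0 hε1 (Finset.mem_Icc.mp hk).2
        linarith
      · refine mul_lt_mul_of_pos_left ?_ hp0
        have : ε ^ (m e0) < ε ^ k0 := pow_lt_pow_right_of_lt_one₀ hε0' hε1' hklt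
        linarith
    exact div_lt_div_of_pos_right
      (Finset.sum_lt_sum (fun e he => hterm e he) ⟨e0, he0, hstrict⟩) hpos
end

section
/- For every real s with 0 < s < 1: ∑_{k=1}^{∞} (1 − (1−s)^k) / (k(k+1)) = s·log(1/s)/(1−s). -/
/-- Telescoping: `∑ 1/((k+1)(k+2)) = 1`. -/
lemma hasSum_telescope : HasSum (fun k : ℕ => 1 / (((k : ℝ) + 1) * ((k : ℝ) + 2))) 1 := by
  have hterm : ∀ k : ℕ, 1 / (((k : ℝ) + 1) * ((k : ℝ) + 2))
      = 1 / ((k : ℝ) + 1) - 1 / ((k : ℝ) + 2) := by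
    intro k
    have h1 : ((k : ℝ) + 1) ≠ 0 := by positivity
    have h2 : ((k : ℝ) + 2) ≠ 0 := by positivity
    field_simp
    ring
  have hps : ∀ n : ℕ, ∑ k ∈ Finset.range n, (1 / (((k : ℝ) + 1) * ((k : ℝ) + 2)))
      = 1 - 1 / ((n : ℝ) + 1) := by
    intro n
    have := Finset.sum_range_sub' (f := fun k : ℕ => 1 / ((k : ℝ) + 1)) n
    simp only [Nat.cast_add, Nat.cast_one] at this
    have hc : ∀ k : ℕ, 1 / ((k : ℝ) + 1 + 1) = 1 / ((k : ℝ) + 2) := fun k => by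
      rw [show (k : ℝ) + 1 + 1 = (k : ℝ) + 2 by ring]
    simp only [hc] at this
    rw [Finset.sum_congr rfl (fun k _ => hterm k)]
    simpa using this
  have hnonneg : ∀ k : ℕ, (0:ℝ) ≤ 1 / (((k : ℝ) + 1) * ((k : ℝ) + 2)) := by
    intro k; positivity
  rw [hasSum_iff_tendsto_nat_of_nonneg hnonneg]
  simp only [hps]
  have : Filter.Tendsto (fun n : ℕ => 1 / ((n : ℝ) + 1)) Filter.atTop (nhds 0) :=
    tendsto_one_div_add_atTop_nhds_zero_nat
  simpa using (tendsto_const_nhds (x := (1:ℝ))).sub this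

/-- The identity underlying `φ_PD(s) = s ln(1/s)/(1−s)` for Yule trees:
`∑_{k=1}^{∞} (1 − (1−s)^k)/(k(k+1)) = s·log(1/s)/(1−s)` for `0 < s < 1`.
(The sum over `k ≥ 1` is written as a sum over `k : ℕ` via `k+1`.) -/
theorem yule_PD_loss_series (s : ℝ) (h0 : 0 < s) (h1 : s < 1) :
    ∑' k : ℕ, (1 - (1 - s) ^ (k + 1)) / (((k : ℝ) + 1) * ((k : ℝ) + 2))
      = s * Real.log (1 / s) / (1 - s) := by
  set q := 1 - s with hq
  have hq0 : 0 < q := by simp [hq]; linarith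
  have hq1 : q < 1 := by simp [hq]; linarith
  have hqne : q ≠ 0 := ne_of_gt hq0
  have habs : |q| < 1 := by rw [abs_of_pos hq0]; exact hq1
  have hs : 1 - q = s := by simp [hq]
  -- A : ∑ q^(k+1)/(k+1) = -log s
  have A : HasSum (fun k : ℕ => q ^ (k + 1) / ((k : ℝ) + 1)) (-Real.log s) := by
    have := Real.hasSum_pow_div_log_of_abs_lt_one habs
    rw [hs] at this
    exact_mod_cast this
  -- B : ∑ q^(k+2)/(k+2) = -log s - q
  have B : HasSum (fun k : ℕ => q ^ (k + 2) / ((k : ℝ) + 2)) (-Real.log s - q) := by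
    have h := (hasSum_nat_add_iff (f := fun k : ℕ => q ^ (k + 1) / ((k : ℝ) + 1))
      (g := -Real.log s - q) 1).mpr (by simpa using A)
    convert h using 2 with k
    · rfl
    push_cast; ring_nf
  -- B' : ∑ q^(k+1)/(k+2) = (-log s - q)/q
  have B' : HasSum (fun k : ℕ => q ^ (k + 1) / ((k : ℝ) + 2)) ((-Real.log s - q) / q) := by
    have := B.div_const q
    convert this using 2 with k
    · rfl
    rw [pow_succ]
    field_simp
    ring
  have C := hasSum_telescope
  -- combine
  have D : HasSum (fun k : ℕ => (1 - q ^ (k + 1)) / (((k : ℝ) + 1) * ((k : ℝ) + 2)))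
      (1 - (-Real.log s - (-Real.log s - q) / q)) := by
    have := C.sub (A.sub B')
    convert this using 2 with k
    · rfl
    have h1 : ((k : ℝ) + 1) ≠ 0 := by positivity
    have h2 : ((k : ℝ) + 2) ≠ 0 := by positivity
    field_simp
    ring
  have hval : 1 - (-Real.log s - (-Real.log s - q) / q) = s * Real.log (1 / s) / (1 - s) := by
    rw [Real.log_div one_ne_zero (ne_of_gt h0), Real.log_one, hq]
    have hne : (1 : ℝ) - s ≠ 0 := by linarith
    field_simp
    ring
  rw [← hval]
  exact D.tsum_eq
end

section
/- The function f : (0,1) → ℝ defined by f(s) = s·log(1/s)/(1−s) is strictly increasing on the open interval (0,1) and concave on (0,1). -/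
open Real Set

private noncomputable def fPD : ℝ → ℝ := fun s : ℝ => s * Real.log (1 / s) / (1 - s)

private lemma hasDerivAt_fPD {x : ℝ} (hx : x ∈ Set.Ioo (0:ℝ) 1) :
    HasDerivAt fPD ((x - 1 - Real.log x) / (1 - x)^2) x := by
  obtain ⟨hx0, hx1⟩ := hx
  have h1x : (0:ℝ) < 1 - x := by linarith
  have hne : (1 : ℝ) - x ≠ 0 := h1x.ne'
  have hnum : HasDerivAt (fun s : ℝ => -(s * Real.log s)) (-(Real.log x + 1)) x := by
    have h := ((hasDerivAt_id x).fun_mul (Real.hasDerivAt_log hx0.ne')).fun_neg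
    refine h.congr_deriv ?_
    field_simp
    simp only [id]
    ring
  have hden : HasDerivAt (fun s : ℝ => 1 - s) (-1) x := by
    simpa using (hasDerivAt_const x (1:ℝ)).fun_sub (hasDerivAt_id x)
  have hdiv := hnum.div hden hne
  have heq : fPD =ᶠ[nhds x] (fun s : ℝ => -(s * Real.log s) / (1 - s)) := by
    filter_upwards [eventually_gt_nhds hx0] with s hs
    simp [fPD, Real.log_div, hs.ne']
  have hval : (-(Real.log x + 1) * (1 - x) - -(x * Real.log x) * (-1)) / (1 - x)^2
      = (x - 1 - Real.log x) / (1 - x)^2 := by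
    congr 1; ring
  rw [← hval]
  exact hdiv.congr_of_eventuallyEq heq

private lemma key_log_lt {x : ℝ} (hx : x ∈ Set.Ioo (0:ℝ) 1) :
    x ^ 2 - 1 < 2 * x * Real.log x := by
  obtain ⟨hx0, hx1⟩ := hx
  set φ : ℝ → ℝ := fun s => Real.log s - (s - 1 / s) / 2 with hφ
  have hderiv : ∀ s ∈ Set.Ioo (0:ℝ) 1, HasDerivAt φ (-(s - 1)^2 / (2 * s^2)) s := by
    intro s hs
    have hs0 := hs.1
    have h1 : HasDerivAt (fun t : ℝ => t - 1 / t) (1 - (-(s^2)⁻¹)) s := by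
      simpa [one_div] using (hasDerivAt_id s).fun_sub (hasDerivAt_inv hs0.ne')
    have h2 := (Real.hasDerivAt_log hs0.ne').fun_sub (h1.div_const 2)
    refine h2.congr_deriv ?_
    field_simp
    ring
  have hanti : StrictAntiOn φ (Set.Ioc (0:ℝ) 1) := by
    apply strictAntiOn_of_deriv_neg (convex_Ioc 0 1)
    · intro t ht
      have ht0 := ht.1
      exact ((Real.continuousAt_log ht0.ne').sub
        (((continuousAt_id).sub (continuousAt_const.div continuousAt_id ht0.ne')).div_const
          2)).continuousWithinAt
    · intro s hs
      rw [interior_Ioc] at hs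
      rw [(hderiv s hs).deriv]
      have hne1 : s - 1 ≠ 0 := sub_ne_zero.mpr (ne_of_lt hs.2)
      have h1 : (0:ℝ) < (s - 1)^2 := pow_two_pos_of_ne_zero hne1
      have hs0 : (0:ℝ) < s := hs.1
      have h2 : (0:ℝ) < 2 * s^2 := by positivity
      exact div_neg_of_neg_of_pos (by linarith) h2
  have h01 : x ∈ Set.Ioc (0:ℝ) 1 := ⟨hx0, hx1.le⟩
  have h11 : (1:ℝ) ∈ Set.Ioc (0:ℝ) 1 := ⟨one_pos, le_refl 1⟩
  have hlt := hanti h01 h11 hx1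
  simp only [hφ, Real.log_one] at hlt
  norm_num at hlt
  have hφ1 : 0 < Real.log x - (x - 1/x)/2 := by rw [one_div]; linarith
  have hmul := mul_pos hx0 hφ1
  have h3 : x * (Real.log x - (x - 1/x)/2) = x * Real.log x - (x^2 - 1)/2 := by
    field_simp
  rw [h3] at hmul
  nlinarith [hmul]

private lemma derivWithin_eq {x : ℝ} (hx : x ∈ Set.Ioo (0:ℝ) 1) :
    deriv fPD x = (x - 1 - Real.log x) / (1 - x)^2 :=
  (hasDerivAt_fPD hx).deriv

private lemma hasDerivAt_deriv_fPD {x : ℝ} (hx : x ∈ Set.Ioo (0:ℝ) 1) :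
    HasDerivAt (deriv fPD)
      (((1 - 1/x) * (1 - x)^2 - (x - 1 - Real.log x) * (-2 * (1 - x))) / ((1 - x)^2)^2) x := by
  obtain ⟨hx0, hx1⟩ := hx
  have h1x : (0:ℝ) < 1 - x := by linarith
  have hne : ((1:ℝ) - x)^2 ≠ 0 := by positivity
  have hnum : HasDerivAt (fun s : ℝ => s - 1 - Real.log s) (1 - 1/x) x := by
    have := ((hasDerivAt_id x).fun_sub (hasDerivAt_const x 1)).fun_sub (Real.hasDerivAt_log hx0.ne')
    simpa [one_div] using this
  have hden : HasDerivAt (fun s : ℝ => (1 - s)^2) (-2 * (1 - x)) x := by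
    have h1 : HasDerivAt (fun s : ℝ => 1 - s) (-1) x := by
      simpa using (hasDerivAt_const x (1:ℝ)).fun_sub (hasDerivAt_id x)
    have := h1.fun_pow 2
    refine this.congr_deriv ?_
    ring
  have hdiv := hnum.div hden hne
  have heq : deriv fPD =ᶠ[nhds x] (fun s : ℝ => (s - 1 - Real.log s) / (1 - s)^2) := by
    have hopen : Set.Ioo (0:ℝ) 1 ∈ nhds x := isOpen_Ioo.mem_nhds ⟨hx0, hx1⟩
    filter_upwards [hopen] with s hs
    exact derivWithin_eq hs
  exact hdiv.congr_of_eventuallyEq heq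

private lemma deriv2_neg {x : ℝ} (hx : x ∈ Set.Ioo (0:ℝ) 1) :
    deriv^[2] fPD x < 0 := by
  obtain ⟨hx0, hx1⟩ := hx
  have h1x : (0:ℝ) < 1 - x := by linarith
  have h := (hasDerivAt_deriv_fPD ⟨hx0, hx1⟩).deriv
  simp only [Function.iterate_succ, Function.iterate_zero, Function.comp_apply, id_eq]
  rw [h]
  have hden : (0:ℝ) < (((1:ℝ) - x)^2)^2 := by positivity
  apply div_neg_of_neg_of_pos _ hden
  have hkey := key_log_lt ⟨hx0, hx1⟩
  have hnum : (1 - 1/x) * (1 - x)^2 - (x - 1 - Real.log x) * (-2 * (1 - x))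
      = ((1 - x) / x) * ((x^2 - 1) - 2 * x * Real.log x) := by
    field_simp
    ring
  rw [hnum]
  have h1 : (0:ℝ) < (1 - x) / x := div_pos h1x hx0
  exact mul_neg_of_pos_of_neg h1 (by linarith)

private lemma continuousOn_fPD : ContinuousOn fPD (Set.Ioo (0:ℝ) 1) := by
  intro t ht
  have ht0 := ht.1
  have ht1 : (1:ℝ) - t ≠ 0 := by have := ht.2; intro h; linarith [sub_eq_zero.mp h]
  exact ((continuousAt_id.mul ((Real.continuousAt_log (one_div_ne_zero ht0.ne')).comp
    (continuousAt_const.div continuousAt_id ht0.ne'))).div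
    (continuousAt_const.sub continuousAt_id) ht1).continuousWithinAt

/-- The function `φ_PD(s) = s·log(1/s)/(1−s)` is strictly increasing and
concave on the open interval `(0,1)`. -/
theorem yule_PD_proportion_strictMono_concave :
    StrictMonoOn (fun s : ℝ => s * Real.log (1 / s) / (1 - s)) (Set.Ioo 0 1) ∧
    ConcaveOn ℝ (Set.Ioo 0 1) (fun s : ℝ => s * Real.log (1 / s) / (1 - s)) := by
  constructor
  · apply strictMonoOn_of_deriv_pos (convex_Ioo 0 1) continuousOn_fPD
    intro x hx
    rw [interior_Ioo] at hx
    rw [derivWithin_eq hx]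
    obtain ⟨hx0, hx1⟩ := hx
    apply div_pos _ (pow_pos (by linarith : (0:ℝ) < 1 - x) 2)
    have := Real.log_lt_sub_one_of_pos hx0 (ne_of_lt hx1)
    linarith
  · apply StrictConcaveOn.concaveOn
    apply strictConcaveOn_of_deriv2_neg (convex_Ioo 0 1) continuousOn_fPD
    intro x hx
    rw [interior_Ioo] at hx
    exact deriv2_neg hx
end

section
/- Let ρ and s be real numbers with 0 < ρ < 1, 0 < s < 1 and ρ ≠ 1 − s. Then ρ·s·log(s/(1−ρ)) / ((ρ+s−1)·log(1/(1−ρ))) > s. -/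
/-- Key sign lemma: `(ρ+s-1)` and `ρ·log s − (1−s)·log(1−ρ)` have the same
(strict) sign, by strict concavity of `log`. -/
lemma birth_death_key (ρ s : ℝ)
    (hρ0 : 0 < ρ) (hρ1 : ρ < 1) (hs0 : 0 < s) (hs1 : s < 1) (hne : ρ ≠ 1 - s) :
    0 < (ρ + s - 1) * (ρ * Real.log s - (1 - s) * Real.log (1 - ρ)) := by
  have ha0 : 0 < 1 - ρ := by linarith
  have hcc := strictConcaveOn_log_Ioi.2
  rcases lt_or_gt_of_ne (fun h : s = 1 - ρ => hne (by linarith)) with hlt | hgt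
  · -- s < 1 - ρ : points s and 1, weights ρ/(1-s), (1-s-ρ)/(1-s)
    have h1s : 0 < 1 - s := by linarith
    have ht0 : 0 < ρ / (1 - s) := by positivity
    have ht1 : 0 < (1 - s - ρ) / (1 - s) := by
      apply div_pos; linarith; exact h1s
    have hsum : ρ / (1 - s) + (1 - s - ρ) / (1 - s) = 1 := by
      field_simp; ring
    have h := hcc (Set.mem_Ioi.mpr hs0) (Set.mem_Ioi.mpr one_pos)
      (by linarith : s ≠ 1) ht0 ht1 hsum
    simp only [smul_eq_mul, Real.log_one, mul_zero, add_zero] at h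
    have hcomb : ρ / (1 - s) * s + (1 - s - ρ) / (1 - s) * 1 = 1 - ρ := by
      field_simp; ring
    rw [hcomb] at h
    -- h : ρ/(1-s) * log s < log (1-ρ)
    have h2 : ρ * Real.log s < (1 - s) * Real.log (1 - ρ) := by
      have := (div_lt_iff₀ h1s).mp (by rwa [div_mul_eq_mul_div, mul_comm] at h)
      linarith [this]
    nlinarith [h2]
  · -- s > 1 - ρ : points (1-ρ) and 1, weights (1-s)/ρ, (ρ+s-1)/ρ
    have ht0 : 0 < (1 - s) / ρ := by
      apply div_pos; linarith; exact hρ0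
    have ht1 : 0 < (ρ + s - 1) / ρ := by
      apply div_pos; linarith; exact hρ0
    have hsum : (1 - s) / ρ + (ρ + s - 1) / ρ = 1 := by
      field_simp; ring
    have h := hcc (Set.mem_Ioi.mpr ha0) (Set.mem_Ioi.mpr one_pos)
      (by linarith : (1 : ℝ) - ρ ≠ 1) ht0 ht1 hsum
    simp only [smul_eq_mul, Real.log_one, mul_zero, add_zero] at h
    have hcomb : (1 - s) / ρ * (1 - ρ) + (ρ + s - 1) / ρ * 1 = s := by
      field_simp; ring
    rw [hcomb] at h
    have h2 : (1 - s) * Real.log (1 - ρ) < ρ * Real.log s := by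
      have := (div_lt_iff₀ hρ0).mp (by rwa [div_mul_eq_mul_div, mul_comm] at h)
      linarith [this]
    nlinarith [h2]

/-- For a birth–death tree with `ρ = μ/λ ∈ (0,1)` and survival probability
`s ∈ (0,1)` with `ρ ≠ 1 − s`, the limiting surviving proportion of
phylogenetic diversity `φ_PD(s) = ρs·log(s/(1−ρ))/((ρ+s−1)·log(1/(1−ρ)))`
strictly exceeds `s`. -/
theorem birth_death_PD_proportion_gt (ρ s : ℝ)
    (hρ0 : 0 < ρ) (hρ1 : ρ < 1) (hs0 : 0 < s) (hs1 : s < 1) (hne : ρ ≠ 1 - s) :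
    s < ρ * s * Real.log (s / (1 - ρ)) / ((ρ + s - 1) * Real.log (1 / (1 - ρ))) := by
  have ha0 : 0 < 1 - ρ := by linarith
  have hL : Real.log (1 / (1 - ρ)) = -Real.log (1 - ρ) := by
    rw [one_div, Real.log_inv]
  have hLs : Real.log (s / (1 - ρ)) = Real.log s - Real.log (1 - ρ) :=
    Real.log_div (ne_of_gt hs0) (ne_of_gt ha0)
  have hLneg : Real.log (1 - ρ) < 0 := Real.log_neg ha0 (by linarith)
  have key := birth_death_key ρ s hρ0 hρ1 hs0 hs1 hne
  rw [hL, hLs]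
  rcases lt_or_gt_of_ne (fun h : ρ + s - 1 = 0 => hne (by linarith)) with hd | hd
  · -- ρ + s - 1 < 0, denominator (ρ+s-1)*(-log(1-ρ)) < 0
    have hden : (ρ + s - 1) * -Real.log (1 - ρ) < 0 := by
      apply mul_neg_of_neg_of_pos hd; linarith
    rw [lt_div_iff_of_neg hden]
    -- need: ρ*s*(log s - log(1-ρ)) < s * ((ρ+s-1) * -log(1-ρ))
    nlinarith [key, hs0]
  · have hden : 0 < (ρ + s - 1) * -Real.log (1 - ρ) := by
      apply mul_pos hd; linarith
    rw [lt_div_iff₀ hden]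
    nlinarith [key, hs0]
end

section
/- Fix a real s with 0 < s < 1. Then ρ·s·log(s/(1−ρ)) / ((ρ+s−1)·log(1/(1−ρ))) tends to 1 as ρ tends to 1 from below. -/
open Filter

/-- As `ρ = μ/λ` approaches `1` from below (the critical birth–death case),
the limiting surviving proportion of phylogenetic diversity
`φ_PD(s) = ρs·log(s/(1−ρ))/((ρ+s−1)·log(1/(1−ρ)))` tends to `1`, for every
fixed survival probability `s ∈ (0,1)`. -/
theorem birth_death_PD_proportion_tendsto_one (s : ℝ) (hs0 : 0 < s) (hs1 : s < 1) :
    Tendsto (fun ρ : ℝ =>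
        ρ * s * Real.log (s / (1 - ρ)) / ((ρ + s - 1) * Real.log (1 / (1 - ρ))))
      (nhdsWithin 1 (Set.Iio 1)) (nhds 1) := by
  have hsub : Tendsto (fun ρ : ℝ => 1 - ρ) (nhdsWithin 1 (Set.Iio 1))
      (nhdsWithin 0 (Set.Ioi 0)) := by
    apply tendsto_nhdsWithin_of_tendsto_nhds_of_eventually_within
    · have h : Continuous fun ρ : ℝ => 1 - ρ := by continuity
      simpa using (h.tendsto 1).mono_left nhdsWithin_le_nhds
    · filter_upwards [self_mem_nhdsWithin] with ρ hρ
      simp only [Set.mem_Iio] at hρ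
      simp [Set.mem_Ioi]; linarith
  have hL : Tendsto (fun ρ : ℝ => -Real.log (1 - ρ)) (nhdsWithin 1 (Set.Iio 1)) atTop := by
    have h := Real.tendsto_log_nhdsGT_zero.comp hsub
    exact tendsto_neg_atBot_atTop.comp h
  have h1 : Tendsto (fun ρ : ℝ => ρ * s / (ρ + s - 1)) (nhdsWithin 1 (Set.Iio 1)) (nhds 1) := by
    have hc : ContinuousAt (fun ρ : ℝ => ρ * s / (ρ + s - 1)) 1 := by
      apply ContinuousAt.div
      · fun_prop
      · fun_prop
      · simpa using hs0.ne'
    have h := hc.tendsto.mono_left (nhdsWithin_le_nhds (s := Set.Iio 1))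
    have : (1 : ℝ) * s / (1 + s - 1) = 1 := by
      field_simp
      rw [add_sub_cancel_left, div_self hs0.ne']
    rwa [this] at h
  have h2 : Tendsto (fun ρ : ℝ => Real.log (s / (1 - ρ)) / Real.log (1 / (1 - ρ)))
      (nhdsWithin 1 (Set.Iio 1)) (nhds 1) := by
    have h0 : Tendsto (fun ρ : ℝ => Real.log s / (-Real.log (1 - ρ)))
        (nhdsWithin 1 (Set.Iio 1)) (nhds 0) := tendsto_const_nhds.div_atTop hL
    have key : Tendsto (fun ρ : ℝ => Real.log s / (-Real.log (1 - ρ)) + 1)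
        (nhdsWithin 1 (Set.Iio 1)) (nhds 1) := by
      simpa using h0.add (tendsto_const_nhds (x := (1 : ℝ)))
    refine key.congr' ?_
    filter_upwards [Ioo_mem_nhdsLT_of_mem (by norm_num : (1:ℝ) ∈ Set.Ioc 0 1)] with ρ hρ
    obtain ⟨h0ρ, h1ρ⟩ := hρ
    have ht : 0 < 1 - ρ := by linarith
    have hlt : 1 - ρ < 1 := by linarith
    have hlog : Real.log (1 - ρ) < 0 := Real.log_neg ht hlt
    have hne : Real.log (1 - ρ) ≠ 0 := hlog.ne
    rw [Real.log_div hs0.ne' ht.ne', Real.log_div one_ne_zero ht.ne', Real.log_one]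
    rw [zero_sub, sub_div, div_neg, div_neg, div_self hne]
    ring
  have hmul := h1.mul h2
  have heq : (fun ρ : ℝ =>
      ρ * s * Real.log (s / (1 - ρ)) / ((ρ + s - 1) * Real.log (1 / (1 - ρ)))) =
      fun ρ : ℝ => (ρ * s / (ρ + s - 1)) *
        (Real.log (s / (1 - ρ)) / Real.log (1 / (1 - ρ))) := by
    funext ρ
    rw [div_mul_div_comm]
  rw [heq]
  simpa using hmul
end

section
/- Let λ > μ > 0 and 0 < s < 1 be real numbers, set ρ = μ/λ and a = λ − μ, and assume s ≠ 1 − ρ. Define I(x) = ∫_0^∞ e^{−aτ} / ((1−x−ρ)·e^{−aτ} + x) dτ for x ∈ (0,1]. Then s·I(s)/I(1) = ρ·s·log(s/(1−ρ)) / ((ρ+s−1)·log(1/(1−ρ))). -/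
open MeasureTheory Real Filter Topology

lemma key_integral (a ρ x : ℝ) (ha : 0 < a) (hρ0 : 0 < ρ) (hρ1 : ρ < 1)
    (hx0 : 0 < x) (hx1 : x ≤ 1) (hc : 1 - x - ρ ≠ 0) :
    ∫ τ in Set.Ioi (0:ℝ), Real.exp (-a*τ) / ((1-x-ρ)*Real.exp (-a*τ) + x)
      = Real.log ((1-ρ)/x) / (a*(1-x-ρ)) := by
  set c := 1 - x - ρ with hcdef
  clear_value c
  have hρ' : 0 < 1 - ρ := by linarith
  have hac : a * c ≠ 0 := mul_ne_zero ha.ne' hc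
  set m := min x (1-ρ) with hmdef
  have hm : 0 < m := lt_min hx0 hρ'
  have hden : ∀ τ : ℝ, 0 ≤ τ → m ≤ c * Real.exp (-a*τ) + x := by
    intro τ hτ
    have hu0 : 0 < Real.exp (-a*τ) := Real.exp_pos _
    have hu1 : Real.exp (-a*τ) ≤ 1 := by
      rw [Real.exp_le_one_iff]; nlinarith
    have h1 : m * Real.exp (-a*τ) ≤ (1-ρ) * Real.exp (-a*τ) :=
      mul_le_mul_of_nonneg_right (min_le_right _ _) hu0.le
    have h2 : m * (1 - Real.exp (-a*τ)) ≤ x * (1 - Real.exp (-a*τ)) :=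
      mul_le_mul_of_nonneg_right (min_le_left _ _) (by linarith)
    nlinarith
  have hdenpos : ∀ τ : ℝ, 0 ≤ τ → 0 < c * Real.exp (-a*τ) + x :=
    fun τ hτ => lt_of_lt_of_le hm (hden τ hτ)
  set F : ℝ → ℝ := fun t => -(a*c)⁻¹ * Real.log (c * Real.exp (-a*t) + x) with hFdef
  have hF : ∀ τ ∈ Set.Ioi (0:ℝ), HasDerivAt F
      (Real.exp (-a*τ) / (c*Real.exp (-a*τ)+x)) τ := by
    intro τ hτ
    have h1 : HasDerivAt (fun t : ℝ => -a*t) (-a) τ := by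
      simpa using (hasDerivAt_id τ).const_mul (-a)
    have h2 : HasDerivAt (fun t => Real.exp (-a*t)) (Real.exp (-a*τ) * (-a)) τ := h1.exp
    have h3 : HasDerivAt (fun t => c * Real.exp (-a*t) + x)
        (c * (Real.exp (-a*τ) * (-a))) τ := (h2.const_mul c).add_const x
    have h4 := (h3.log (hdenpos τ (le_of_lt hτ)).ne').const_mul (-(a*c)⁻¹)
    refine h4.congr_deriv ?_
    have hd := (hdenpos τ (le_of_lt hτ)).ne'
    have e : -(a*c)⁻¹ * (c * (Real.exp (-a*τ) * (-a))) = Real.exp (-a*τ) := by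
      rw [show -(a*c)⁻¹ * (c * (Real.exp (-a*τ) * (-a)))
        = Real.exp (-a*τ) * (a*c) * (a*c)⁻¹ by ring]
      exact mul_inv_cancel_right₀ hac _
    rw [← mul_div_assoc, e]
  have hint : IntegrableOn (fun τ => Real.exp (-a*τ) / (c*Real.exp (-a*τ)+x))
      (Set.Ioi (0:ℝ)) := by
    have hg : IntegrableOn (fun τ => Real.exp (-a*τ) * m⁻¹) (Set.Ioi (0:ℝ)) :=
      (exp_neg_integrableOn_Ioi 0 ha).mul_const _
    apply hg.mono'
    · apply ContinuousOn.aestronglyMeasurable _ measurableSet_Ioi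
      apply ContinuousOn.div
      · exact (Real.continuous_exp.comp (continuous_const.mul continuous_id)).continuousOn
      · exact ((continuous_const.mul (Real.continuous_exp.comp
          (continuous_const.mul continuous_id))).add continuous_const).continuousOn
      · exact fun τ hτ => (hdenpos τ (le_of_lt hτ)).ne'
    · filter_upwards [ae_restrict_mem measurableSet_Ioi] with τ hτ
      have h1 := hdenpos τ (le_of_lt hτ)
      have h2 := hden τ (le_of_lt hτ)
      rw [Real.norm_eq_abs, abs_of_nonneg (div_nonneg (Real.exp_pos _).le h1.le)]
      rw [div_eq_mul_inv]
      exact mul_le_mul_of_nonneg_left (by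
        exact inv_anti₀ hm h2) (Real.exp_pos _).le
  have htend : Tendsto F atTop (𝓝 (-(a*c)⁻¹ * Real.log x)) := by
    have h1 : Tendsto (fun τ:ℝ => -a*τ) atTop atBot :=
      tendsto_id.const_mul_atTop_of_neg (by linarith)
    have h2 : Tendsto (fun τ => Real.exp (-a*τ)) atTop (𝓝 0) :=
      Real.tendsto_exp_atBot.comp h1
    have h3 : Tendsto (fun τ => c*Real.exp (-a*τ)+x) atTop (𝓝 (c*0+x)) :=
      (h2.const_mul c).add_const x
    have h4 : Tendsto (fun τ => c*Real.exp (-a*τ)+x) atTop (𝓝 x) := by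
      simpa using h3
    exact ((Real.continuousAt_log hx0.ne').tendsto.comp h4).const_mul _
  have hcont : ContinuousWithinAt F (Set.Ici 0) 0 := by
    have hne0 : c * Real.exp (-a*0) + x ≠ 0 := (hdenpos 0 le_rfl).ne'
    have h1 : ContinuousAt (fun t : ℝ => c * Real.exp (-a*t) + x) 0 := by
      fun_prop
    have h2 : ContinuousAt F 0 := (h1.log hne0).const_mul _
    exact h2.continuousWithinAt
  have := integral_Ioi_of_hasDerivAt_of_tendsto hcont hF hint htend
  rw [this]
  have hF0 : F 0 = -(a*c)⁻¹ * Real.log (1-ρ) := by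
    simp only [hFdef, mul_zero, neg_zero, Real.exp_zero, mul_one]
    congr 2
    rw [hcdef]; ring
  rw [hF0, Real.log_div hρ'.ne' hx0.ne']
  field_simp
  ring

/-- When the feature loss rate is `ν = 0`, the formula
`φ_FD(s) = s·I(s)/I(1)` with
`I(x) = ∫_0^∞ e^{−aτ}/((1−x−ρ)e^{−aτ} + x) dτ`, `ρ = μ/λ`, `a = λ − μ`,
reduces to the explicit phylogenetic diversity formula
`φ_PD(s) = ρs·log(s/(1−ρ))/((ρ+s−1)·log(1/(1−ρ)))`. -/
theorem FD_formula_reduces_to_PD (lam mu s ρ a : ℝ)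
    (hmu : 0 < mu) (hlam : mu < lam) (hs0 : 0 < s) (hs1 : s < 1)
    (hρ : ρ = mu / lam) (ha : a = lam - mu) (hne : s ≠ 1 - ρ)
    (I : ℝ → ℝ)
    (hI : ∀ x, I x = ∫ τ in Set.Ioi (0 : ℝ),
        Real.exp (-a * τ) / ((1 - x - ρ) * Real.exp (-a * τ) + x)) :
    s * I s / I 1
      = ρ * s * Real.log (s / (1 - ρ)) / ((ρ + s - 1) * Real.log (1 / (1 - ρ))) := by
  have hlam0 : 0 < lam := hmu.trans hlam
  have hρ0 : 0 < ρ := hρ ▸ div_pos hmu hlam0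
  have hρ1 : ρ < 1 := by rw [hρ]; exact (div_lt_one hlam0).mpr hlam
  have ha0 : 0 < a := by rw [ha]; linarith
  have hcs : 1 - s - ρ ≠ 0 := fun h => hne (by linarith)
  have hc1 : 1 - 1 - ρ ≠ 0 := by simp; linarith
  have hIs : I s = Real.log ((1-ρ)/s) / (a*(1-s-ρ)) := by
    rw [hI s]; exact key_integral a ρ s ha0 hρ0 hρ1 hs0 hs1.le hcs
  have hI1 : I 1 = Real.log ((1-ρ)/1) / (a*(1-1-ρ)) := by
    rw [hI 1]; exact key_integral a ρ 1 ha0 hρ0 hρ1 one_pos le_rfl hc1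
  have hρ' : 0 < 1 - ρ := by linarith
  have hlog : Real.log (1-ρ) ≠ 0 := (Real.log_neg hρ' (by linarith)).ne
  rw [hIs, hI1, div_one, Real.log_div hρ'.ne' hs0.ne',
    Real.log_div hs0.ne' hρ'.ne', Real.log_div one_ne_zero hρ'.ne', Real.log_one]
  have h1 : (1:ℝ) - 1 - ρ = -ρ := by ring
  rw [h1]
  have hρs : ρ + s - 1 ≠ 0 := fun h => hcs (by linarith)
  field_simp
  ring
end

section
/- Let X be a finite type and ε : X → ℝ with 0 ≤ ε(x) ≤ 1 for all x. Let μ be the product measure on (X → Bool) whose x-th coordinate is Bernoulli with P(true) = 1 − ε(x) (coordinates independent). Let E be a finite set, C : E → Finset X with C(e) nonempty for all e, and ℓ : E → ℝ with ℓ(e) ≥ 0. For ω : X → Bool define PD(ω) = ∑_{e ∈ E : ∃ x ∈ C(e), ω(x) = true} ℓ(e). Then ∫ ((∑_{e∈E} ℓ(e)) − PD(ω)) dμ(ω) = ∑_{e∈E} ℓ(e) · ∏_{x ∈ C(e)} ε(x). -/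
open MeasureTheory Finset

/-- Expected loss of phylogenetic diversity under the generalised
field-of-bullets model: each species `x` survives independently with
probability `1 − ε x`, and the expected loss of PD equals
`∑_e ℓ e · ∏_{x ∈ C e} ε x`. -/
theorem expected_PD_loss_gFOB {X : Type*} [Fintype X]
    (ε : X → ℝ) (hε : ∀ x, 0 ≤ ε x ∧ ε x ≤ 1)
    {E : Type*} (Es : Finset E) (C : E → Finset X) (hC : ∀ e ∈ Es, (C e).Nonempty)
    (ℓ : E → ℝ) (hℓ : ∀ e ∈ Es, 0 ≤ ℓ e) :
    (∫ ω : X → Bool,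
        ((∑ e ∈ Es, ℓ e) - ∑ e ∈ Es.filter (fun e => ∃ x ∈ C e, ω x = true), ℓ e)
      ∂(Measure.pi fun x => (PMF.bernoulli (Real.toNNReal (1 - ε x))
          (by simpa using (hε x).1)).toMeasure))
      = ∑ e ∈ Es, ℓ e * ∏ x ∈ C e, ε x := by
  classical
  set μx : ∀ x : X, Measure Bool := fun x =>
    (PMF.bernoulli (Real.toNNReal (1 - ε x)) (by simpa using (hε x).1)).toMeasure with hμx
  set μ : Measure (X → Bool) := Measure.pi μx with hμ
  have hprob : ∀ x, IsProbabilityMeasure (μx x) := fun x => PMF.toMeasure.isProbabilityMeasure _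
  have hμprob : IsProbabilityMeasure μ := by
    rw [hμ]; infer_instance
  -- the set of bullets killing edge e
  set A : E → Set (X → Bool) := fun e => {ω | ∀ x ∈ C e, ω x = false} with hA
  have hAmeas : ∀ e, MeasurableSet (A e) := fun e => (Set.toFinite _).measurableSet
  -- pointwise rewrite of the integrand
  have hpt : ∀ ω : X → Bool,
      ((∑ e ∈ Es, ℓ e) - ∑ e ∈ Es.filter (fun e => ∃ x ∈ C e, ω x = true), ℓ e)
        = ∑ e ∈ Es, Set.indicator (A e) (fun _ => ℓ e) ω := by
    intro ω
    rw [Finset.sum_filter, ← Finset.sum_sub_distrib]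
    refine Finset.sum_congr rfl fun e _ => ?_
    by_cases h : ∃ x ∈ C e, ω x = true
    · have : ω ∉ A e := by
        rintro hω
        obtain ⟨x, hx, hxt⟩ := h
        simp [hA, Set.mem_setOf_eq] at hω
        simp [hω x hx] at hxt
      simp [h, Set.indicator_of_notMem this]
    · have : ω ∈ A e := by
        intro x hx
        by_contra hc
        exact h ⟨x, hx, by simpa using hc⟩
      simp [h, Set.indicator_of_mem this]
  -- measure of A e
  have hAmeasure : ∀ e, μ (A e) = ∏ x ∈ C e, ENNReal.ofReal (ε x) := by
    intro e
    have hAe : A e = Set.pi Set.univ (fun x => if x ∈ C e then ({false} : Set Bool) else Set.univ) := by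
      ext ω
      simp only [hA, Set.mem_setOf_eq, Set.mem_pi, Set.mem_univ, true_implies]
      constructor
      · intro h x
        by_cases hx : x ∈ C e <;> simp [hx, h x]
      · intro h x hx
        have := h x
        simpa [hx] using this
    rw [hAe, hμ, Measure.pi_pi]
    have hfalse : ∀ x, μx x ({false} : Set Bool) = ENNReal.ofReal (ε x) := by
      intro x
      rw [hμx]
      rw [PMF.toMeasure_apply_singleton _ _ (measurableSet_singleton _)]
      show (1 : ENNReal) - ENNReal.ofReal (1 - ε x) = ENNReal.ofReal (ε x)
      rw [← ENNReal.ofReal_one, ← ENNReal.ofReal_sub _ (by linarith [(hε x).2])]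
      norm_num
    calc ∏ x : X, μx x (if x ∈ C e then ({false} : Set Bool) else Set.univ)
        = ∏ x : X, (if x ∈ C e then μx x {false} else 1) := by
          refine Finset.prod_congr rfl fun x _ => ?_
          by_cases hx : x ∈ C e
          · simp [hx]
          · rw [if_neg hx, if_neg hx]; exact (hprob x).measure_univ
      _ = ∏ x ∈ C e, μx x {false} := by
          rw [← Finset.prod_filter, Finset.filter_mem_eq_inter, Finset.univ_inter]
      _ = ∏ x ∈ C e, ENNReal.ofReal (ε x) := Finset.prod_congr rfl fun x _ => hfalse x
  -- compute the integral
  have hint : ∀ e ∈ Es, Integrable (fun ω => Set.indicator (A e) (fun _ => ℓ e) ω) μ := by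
    intro e _
    exact (integrable_const (ℓ e)).indicator (hAmeas e)
  calc (∫ ω : X → Bool,
        ((∑ e ∈ Es, ℓ e) - ∑ e ∈ Es.filter (fun e => ∃ x ∈ C e, ω x = true), ℓ e) ∂μ)
      = ∫ ω, (∑ e ∈ Es, Set.indicator (A e) (fun _ => ℓ e) ω) ∂μ := by
        exact integral_congr_ae (Filter.Eventually.of_forall hpt)
    _ = ∑ e ∈ Es, ∫ ω, Set.indicator (A e) (fun _ => ℓ e) ω ∂μ :=
        integral_finset_sum Es hint
    _ = ∑ e ∈ Es, ℓ e * ∏ x ∈ C e, ε x := by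
        refine Finset.sum_congr rfl fun e _ => ?_
        rw [integral_indicator_const _ (hAmeas e), measureReal_def, hAmeasure e, smul_eq_mul, mul_comm]
        congr 1
        rw [ENNReal.toReal_prod]
        exact Finset.prod_congr rfl fun x _ => ENNReal.toReal_ofReal (hε x).1
end

section
/- Let X be a finite type and ε : X → ℝ with 0 ≤ ε(x) ≤ 1. Let μ be the product measure on (X → Bool) whose x-th coordinate is Bernoulli with P(true) = 1 − ε(x) (coordinates independent). Let E be a finite set, C : E → Finset X with C(e) nonempty, and ℓ : E → ℝ with ℓ(e) ≥ 0; for a finite subset Y of X define PD(Y) = ∑_{e : C(e) ∩ Y ≠ ∅} ℓ(e), and let S(ω) = {x : ω(x) = true}. Then for every x₀ ∈ X: ∫ (PD(S(ω) ∪ {x₀}) − PD(S(ω) \ {x₀})) dμ(ω) = ∑_{e ∈ E : x₀ ∈ C(e)} ℓ(e) · ∏_{s ∈ C(e), s ≠ x₀} ε(s). -/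
open MeasureTheory Finset

private lemma gFOB_prod_ind {X : Type*} [DecidableEq X] (T S : Finset X) :
    ∏ s ∈ T, (if s ∈ S then (0:ℝ) else 1) = if (T ∩ S).Nonempty then 0 else 1 := by
  by_cases h : (T ∩ S).Nonempty
  · obtain ⟨s, hs⟩ := h
    rw [if_pos ⟨s, hs⟩]
    exact Finset.prod_eq_zero (Finset.mem_of_mem_inter_left hs)
      (if_pos (Finset.mem_of_mem_inter_right hs))
  · rw [if_neg h]
    refine Finset.prod_eq_one fun s hs => if_neg fun hsS => h ⟨s, Finset.mem_inter.2 ⟨hs, hsS⟩⟩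

private lemma gFOB_pointwise {X : Type*} [DecidableEq X] {E : Type*} (Es : Finset E)
    (C : E → Finset X) (ℓ : E → ℝ) (x₀ : X) (S : Finset X) :
    (∑ e ∈ Es.filter (fun e => ((C e) ∩ insert x₀ S).Nonempty), ℓ e) -
      (∑ e ∈ Es.filter (fun e => ((C e) ∩ S.erase x₀).Nonempty), ℓ e) =
    ∑ e ∈ Es.filter (fun e => x₀ ∈ C e),
      ℓ e * ∏ s ∈ (C e).erase x₀, (if s ∈ S then (0:ℝ) else 1) := by
  simp only [Finset.sum_filter]
  rw [← Finset.sum_sub_distrib]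
  refine Finset.sum_congr rfl fun e _ => ?_
  rw [gFOB_prod_ind, Finset.erase_inter]
  by_cases hx : x₀ ∈ C e
  · have hA : ((C e) ∩ insert x₀ S).Nonempty :=
      ⟨x₀, Finset.mem_inter.2 ⟨hx, Finset.mem_insert_self _ _⟩⟩
    rw [if_pos hA, if_pos hx, Finset.inter_erase]
    by_cases hB : (((C e) ∩ S).erase x₀).Nonempty
    · rw [if_pos hB, if_pos hB]; ring
    · rw [if_neg hB, if_neg hB]; ring
  · rw [if_neg hx, Finset.inter_insert_of_notMem hx, Finset.inter_erase,
      Finset.erase_eq_of_notMem (fun h => hx (Finset.mem_of_mem_inter_left h))]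
    ring

private lemma gFOB_pi_prod {X : Type*} [Fintype X] (μ : X → Measure Bool)
    [∀ x, IsProbabilityMeasure (μ x)] (f : X → Bool → ℝ) :
    ∫ ω : X → Bool, ∏ x, f x (ω x) ∂Measure.pi μ = ∏ x, ∫ b, f x b ∂μ x :=
  integral_fintype_prod_eq_prod (μ := μ) f

private lemma gFOB_bern_int (p : ℝ) (h0 : 0 ≤ p) (h1 : p ≤ 1) :
    ∫ b : Bool, (if b then (0:ℝ) else 1)
      ∂(PMF.bernoulli (Real.toNNReal (1 - p)) (by simpa using h0)).toMeasure = p := by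
  rw [integral_fintype .of_finite]
  have ht : ∀ b : Bool, ((PMF.bernoulli (Real.toNNReal (1 - p)) (by simpa using h0)).toMeasure
      {b}) = (PMF.bernoulli (Real.toNNReal (1 - p)) (by simpa using h0)) b := fun b =>
    PMF.toMeasure_apply_singleton _ _ (measurableSet_singleton b)
  simp only [Fintype.sum_bool, measureReal_def, ht, PMF.bernoulli_apply, Bool.cond_true,
    Bool.cond_false]
  have : ((1 - Real.toNNReal (1 - p) : NNReal) : ℝ) = p := by
    rw [NNReal.coe_sub (by simpa using h0), Real.coe_toNNReal _ (by linarith)]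
    norm_num
  simp [this]
  rw [← ENNReal.coe_one, ← ENNReal.coe_sub, ENNReal.coe_toReal, this]

/-- The gFOB formula for the stochastic diversity index `ψ_{x₀}`: the expected
increase in phylogenetic diversity when species `x₀` is present compared with
absent equals `∑_{e : x₀ ∈ C e} ℓ e · ∏_{s ∈ C e ∖ {x₀}} ε s`. -/
theorem psi_gFOB_formula {X : Type*} [Fintype X] [DecidableEq X]
    (ε : X → ℝ) (hε : ∀ x, 0 ≤ ε x ∧ ε x ≤ 1)
    {E : Type*} (Es : Finset E) (C : E → Finset X) (hC : ∀ e ∈ Es, (C e).Nonempty)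
    (ℓ : E → ℝ) (hℓ : ∀ e ∈ Es, 0 ≤ ℓ e)
    (PD : Finset X → ℝ)
    (hPD : ∀ Y : Finset X,
      PD Y = ∑ e ∈ Es.filter (fun e => ((C e) ∩ Y).Nonempty), ℓ e)
    (x₀ : X) :
    (∫ ω : X → Bool,
        (PD (insert x₀ (Finset.univ.filter (fun x => ω x = true))) -
          PD ((Finset.univ.filter (fun x => ω x = true)).erase x₀))
      ∂(Measure.pi fun x => (PMF.bernoulli (Real.toNNReal (1 - ε x))
          (by simpa using (hε x).1)).toMeasure))
      = ∑ e ∈ Es.filter (fun e => x₀ ∈ C e), ℓ e * ∏ s ∈ (C e).erase x₀, ε s := by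
  set μ := fun x => (PMF.bernoulli (Real.toNNReal (1 - ε x))
      (by simpa using (hε x).1)).toMeasure with hμ
  have hint : ∀ ω : X → Bool,
      PD (insert x₀ (Finset.univ.filter (fun x => ω x = true))) -
        PD ((Finset.univ.filter (fun x => ω x = true)).erase x₀) =
      ∑ e ∈ Es.filter (fun e => x₀ ∈ C e),
        ℓ e * ∏ s ∈ (C e).erase x₀, (if ω s then (0:ℝ) else 1) := by
    intro ω
    rw [hPD, hPD, gFOB_pointwise]
    refine Finset.sum_congr rfl fun e _ => ?_
    congr 1
    refine Finset.prod_congr rfl fun s _ => ?_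
    by_cases h : ω s = true <;> simp [h]
  simp only [hint]
  rw [integral_finset_sum _ (fun e _ => .of_finite)]
  refine Finset.sum_congr rfl fun e _ => ?_
  rw [MeasureTheory.integral_const_mul]
  congr 1
  have hext : ∀ ω : X → Bool,
      (∏ s ∈ (C e).erase x₀, (if ω s then (0:ℝ) else 1)) =
      ∏ x : X, (if x ∈ (C e).erase x₀ then (if ω x then (0:ℝ) else 1) else 1) := by
    intro ω
    rw [Finset.prod_ite_mem, Finset.univ_inter]
  simp only [hext]
  rw [gFOB_pi_prod μ (fun x b => if x ∈ (C e).erase x₀ then (if b then (0:ℝ) else 1) else 1)]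
  rw [show (∏ s ∈ (C e).erase x₀, ε s) = ∏ x : X, (if x ∈ (C e).erase x₀ then ε x else 1) by
    rw [Finset.prod_ite_mem, Finset.univ_inter]]
  refine Finset.prod_congr rfl fun x _ => ?_
  by_cases h : x ∈ (C e).erase x₀
  · simp only [if_pos h, hμ]
    exact gFOB_bern_int (ε x) (hε x).1 (hε x).2
  · simp only [if_neg h, hμ]
    rw [integral_const, smul_eq_mul, mul_one, probReal_univ]
end

section
/- Let X be a finite type and ε : X → ℝ with 0 ≤ ε(x) ≤ 1. Let μ be the product measure on (X → Bool) whose x-th coordinate is Bernoulli with P(true) = 1 − ε(x) (coordinates independent). Let E be a finite set, C : E → Finset X with C(e) nonempty, and ℓ : E → ℝ with ℓ(e) ≥ 0; for a finite subset Y of X define PD(Y) = ∑_{e : C(e) ∩ Y ≠ ∅} ℓ(e), and let S(ω) = {x : ω(x) = true}. Then for every x₀ ∈ X: ∫ (PD(S(ω) ∪ {x₀}) − PD(S(ω))) dμ(ω) = ε(x₀) · (∑_{e ∈ E : x₀ ∈ C(e)} ℓ(e) · ∏_{s ∈ C(e), s ≠ x₀} ε(s)). -/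
open MeasureTheory Finset

/-- The EDGE2 relationship `ψ'_{x₀} = ψ_{x₀} · ε(x₀)`: the expected increase
in phylogenetic diversity when species `x₀` is certainly present compared to
when its survival is uncertain equals `ε(x₀)` times the gFOB index
`ψ_{x₀} = ∑_{e : x₀ ∈ C e} ℓ e · ∏_{s ∈ C e ∖ {x₀}} ε s`. -/
theorem psi_prime_eq_psi_mul_eps {X : Type*} [Fintype X] [DecidableEq X]
    (ε : X → ℝ) (hε : ∀ x, 0 ≤ ε x ∧ ε x ≤ 1)
    {E : Type*} (Es : Finset E) (C : E → Finset X) (hC : ∀ e ∈ Es, (C e).Nonempty)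
    (ℓ : E → ℝ) (hℓ : ∀ e ∈ Es, 0 ≤ ℓ e)
    (PD : Finset X → ℝ)
    (hPD : ∀ Y : Finset X,
      PD Y = ∑ e ∈ Es.filter (fun e => ((C e) ∩ Y).Nonempty), ℓ e)
    (x₀ : X) :
    (∫ ω : X → Bool,
        (PD (insert x₀ (Finset.univ.filter (fun x => ω x = true))) -
          PD (Finset.univ.filter (fun x => ω x = true)))
      ∂(Measure.pi fun x => (PMF.bernoulli (Real.toNNReal (1 - ε x))
          (by simpa using (hε x).1)).toMeasure))
      = ε x₀ * ∑ e ∈ Es.filter (fun e => x₀ ∈ C e), ℓ e * ∏ s ∈ (C e).erase x₀, ε s := by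
  classical
  set μ : (x : X) → Measure Bool := fun x => (PMF.bernoulli (Real.toNNReal (1 - ε x))
      (by simpa using (hε x).1)).toMeasure with hμ
  set w : X → Bool → ℝ := fun x b => ((μ x) {b}).toReal with hw
  have hwf : ∀ x, w x false = ε x := by
    intro x
    simp only [hw, hμ]
    rw [PMF.toMeasure_apply_singleton _ _ (by trivial)]
    simp [PMF.bernoulli]
    rw [← ENNReal.coe_one, ← ENNReal.coe_sub, ENNReal.coe_toReal,
      NNReal.coe_sub (by simpa using (hε x).1), NNReal.coe_one,
      Real.coe_toNNReal _ (by linarith [(hε x).2])]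
    ring
  have hwt : ∀ x, w x true = 1 - ε x := by
    intro x
    simp only [hw, hμ]
    rw [PMF.toMeasure_apply_singleton _ _ (by trivial)]
    simp [PMF.bernoulli, (hε x).2]
  -- pointwise identity for the integrand
  have hpt : ∀ ω : X → Bool,
      PD (insert x₀ (Finset.univ.filter (fun x => ω x = true))) -
        PD (Finset.univ.filter (fun x => ω x = true))
      = ∑ e ∈ Es, (if x₀ ∈ C e then ℓ e * ∏ s ∈ C e, (if ω s = false then (1:ℝ) else 0) else 0) := by
    intro ω
    set S := Finset.univ.filter (fun x => ω x = true) with hS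
    rw [hPD, hPD, Finset.sum_filter, Finset.sum_filter, ← Finset.sum_sub_distrib]
    refine Finset.sum_congr rfl fun e _ => ?_
    by_cases hx : x₀ ∈ C e
    · by_cases hne : ((C e) ∩ S).Nonempty
      · obtain ⟨s, hs⟩ := hne
        rw [Finset.mem_inter] at hs
        have hωs : ω s = true := by simpa [hS] using hs.2
        have : ((C e) ∩ insert x₀ S).Nonempty :=
          ⟨s, Finset.mem_inter.2 ⟨hs.1, Finset.mem_insert_of_mem (by simpa [hS] using hωs)⟩⟩
        rw [if_pos this, if_pos ⟨s, Finset.mem_inter.2 hs⟩, if_pos hx]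
        have : (∏ s ∈ C e, (if ω s = false then (1:ℝ) else 0)) = 0 :=
          Finset.prod_eq_zero hs.1 (by simp [hωs])
        rw [this]; ring
      · have h1 : ((C e) ∩ insert x₀ S).Nonempty :=
          ⟨x₀, Finset.mem_inter.2 ⟨hx, Finset.mem_insert_self _ _⟩⟩
        rw [if_pos h1, if_neg hne, if_pos hx]
        have : (∏ s ∈ C e, (if ω s = false then (1:ℝ) else 0)) = 1 := by
          refine Finset.prod_eq_one fun s hs => ?_
          have : ω s ≠ true := fun h => hne ⟨s, Finset.mem_inter.2 ⟨hs, by simp [hS, h]⟩⟩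
          simp [Bool.not_eq_true] at this
          simp [this]
        rw [this]; ring
    · rw [Finset.inter_insert_of_notMem hx, if_neg hx]; ring
  simp_rw [hpt]
  rw [integral_fintype (Integrable.of_finite)]
  -- measure of a singleton path
  have hsing : ∀ ω : X → Bool, (Measure.pi μ).real {ω} = ∏ x, w x (ω x) := by
    intro ω
    have : ({ω} : Set (X → Bool)) = Set.pi Set.univ (fun x => {ω x}) := by
      ext f; simp [funext_iff, eq_comm]
    rw [measureReal_def, this, Measure.pi_pi, ENNReal.toReal_prod]
  simp_rw [hsing, smul_eq_mul, Finset.mul_sum]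
  rw [Finset.sum_comm]
  rw [Finset.sum_filter]
  refine Finset.sum_congr rfl fun e _ => ?_
  by_cases hx : x₀ ∈ C e
  · simp only [if_pos hx]
    have key : ∑ ω : X → Bool, (∏ x, w x (ω x)) * (ℓ e * ∏ s ∈ C e, (if ω s = false then (1:ℝ) else 0))
        = ℓ e * ∏ s ∈ C e, ε s := by
      have h1 : ∀ ω : X → Bool, (∏ x, w x (ω x)) * (ℓ e * ∏ s ∈ C e, (if ω s = false then (1:ℝ) else 0))
          = ℓ e * ∏ x, (w x (ω x) * (if x ∈ C e then (if ω x = false then (1:ℝ) else 0) else 1)) := by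
        intro ω
        rw [Finset.prod_mul_distrib]
        have : (∏ x, (if x ∈ C e then (if ω x = false then (1:ℝ) else 0) else 1))
            = ∏ s ∈ C e, (if ω s = false then (1:ℝ) else 0) := by
          rw [Finset.prod_ite_mem, Finset.univ_inter]
        rw [this]; ring
      simp_rw [h1, ← Finset.mul_sum]
      congr 1
      have hfub := Fintype.prod_sum (κ := fun _ : X => Bool)
        (f := fun x b => w x b * (if x ∈ C e then (if b = false then (1:ℝ) else 0) else 1))
      rw [← hfub]
      have : ∀ x, (∑ b : Bool, w x b * (if x ∈ C e then (if b = false then (1:ℝ) else 0) else 1))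
          = (if x ∈ C e then ε x else 1) := by
        intro x
        rw [Fintype.sum_bool]
        by_cases hxe : x ∈ C e <;> simp [hxe, hwf, hwt]
      simp_rw [this]
      rw [Finset.prod_ite_mem, Finset.univ_inter]
    rw [key, ← Finset.mul_prod_erase _ _ hx]; ring
  · simp [hx]
end
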